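/- arXiv:1707.07962 — 8 statements merged into one kernel-verified Lean document; each statement's English description precedes it below -/
import Mathlib

section
/- Let P be a monic polynomial of degree k ≥ 1 over ℂ and let r > 0 be a real number such that every complex root z₀ of P satisfies |z₀| < r. Then for every natural number m with m ≤ k − 2, the circle integral (1/(2πi)) ∮_{|z| = r} z^m / P(z) dz equals 0. -/
open Polynomial Metric Finset

/-- Let `P` be a monic polynomial of degree `k ≥ 1` over `ℂ` and `r > 0` a real
number such that every root of `P` has modulus `< r`. Then for every `m ≤ k - 2`,
`(1/(2πi)) ∮_{|z| = r} z^m / P(z) dz = 0`. -/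
theorem stmt3 (k : ℕ) (hk : 1 ≤ k) (P : Polynomial ℂ) (hmonic : P.Monic)
    (hdeg : P.natDegree = k) (r : ℝ) (hr : 0 < r)
    (hroots : ∀ z₀ : ℂ, P.IsRoot z₀ → ‖z₀‖ < r)
    (m : ℕ) (hm : m + 2 ≤ k) :
    (2 * Real.pi * Complex.I)⁻¹ * (∮ z in C(0, r), z ^ m / P.eval z) = 0 := by
  suffices h : (∮ z in C(0, r), (fun z : ℂ => z ^ m / P.eval z) z) = 0 by
    simpa using congrArg (fun t => (2 * Real.pi * Complex.I)⁻¹ * t) h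
  set f : ℂ → ℂ := fun z => z ^ m / P.eval z with hf
  have hne : ∀ z : ℂ, r ≤ ‖z‖ → P.eval z ≠ 0 := by
    intro z hz h0
    have := hroots z h0
    linarith
  have hdiff : ∀ z : ℂ, r ≤ ‖z‖ → DifferentiableAt ℂ f z := fun z hz =>
    (differentiableAt_pow m).div (P.differentiableAt) (hne z hz)
  set c : ℝ := ∑ i ∈ Finset.range k, ‖P.coeff i‖ with hc
  have hc0 : 0 ≤ c := Finset.sum_nonneg fun i _ => norm_nonneg _
  -- the integral is independent of the radius `R ≥ r`
  have heq : ∀ R : ℝ, r ≤ R → (∮ z in C(0, R), f z) = ∮ z in C(0, r), f z := by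
    intro R hR
    refine Complex.circleIntegral_eq_of_differentiable_on_annulus_off_countable hr hR
      Set.countable_empty ?_ ?_
    · intro z hz
      have hz' : r ≤ ‖z‖ := by
        have := hz.2
        rw [mem_ball, dist_zero_right, not_lt] at this
        exact this
      exact (hdiff z hz').continuousAt.continuousWithinAt
    · intro z hz
      have hz' : r ≤ ‖z‖ := by
        have := hz.1.2
        rw [mem_closedBall, dist_zero_right, not_le] at this
        exact this.le
      exact hdiff z hz'
  -- norm of the integral is arbitrarily small
  have key : ∀ ε : ℝ, 0 < ε → ‖∮ z in C(0, r), f z‖ ≤ ε := by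
    intro ε hε
    set R : ℝ := max (max r 1) (c + max 1 (2 * Real.pi / ε)) with hR
    have hRr : r ≤ R := le_trans (le_max_left r 1) (le_max_left _ _)
    have hR1 : 1 ≤ R := le_trans (le_max_right r 1) (le_max_left _ _)
    have hR0 : 0 < R := lt_of_lt_of_le one_pos hR1
    have hRc1 : 1 ≤ R - c := by
      have : c + 1 ≤ R :=
        le_trans (add_le_add_right (le_max_left 1 (2 * Real.pi / ε)) c) (le_max_right _ _)
      linarith
    have hRc : 0 < R - c := lt_of_lt_of_le one_pos hRc1
    have hRce : 2 * Real.pi / ε ≤ R - c := by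
      have : c + 2 * Real.pi / ε ≤ R :=
        le_trans (add_le_add_right (le_max_right 1 (2 * Real.pi / ε)) c) (le_max_right _ _)
      linarith
    -- lower bound on `‖P.eval z‖` on the circle of radius `R`
    have hPz : ∀ z : ℂ, ‖z‖ = R → R ^ (k - 1) * (R - c) ≤ ‖P.eval z‖ := by
      intro z hz
      have hev : P.eval z = (∑ i ∈ Finset.range k, P.coeff i * z ^ i) + z ^ k := by
        rw [Polynomial.eval_eq_sum_range, hdeg, Finset.sum_range_succ]
        have h1 : P.coeff k = 1 := by
          have := hmonic.coeff_natDegree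
          rwa [hdeg] at this
        rw [h1, one_mul]
      have hsum : ‖∑ i ∈ Finset.range k, P.coeff i * z ^ i‖ ≤ c * R ^ (k - 1) := by
        calc ‖∑ i ∈ Finset.range k, P.coeff i * z ^ i‖
            ≤ ∑ i ∈ Finset.range k, ‖P.coeff i * z ^ i‖ := norm_sum_le _ _
          _ = ∑ i ∈ Finset.range k, ‖P.coeff i‖ * R ^ i := by
              simp [norm_mul, norm_pow, hz]
          _ ≤ ∑ i ∈ Finset.range k, ‖P.coeff i‖ * R ^ (k - 1) := by
              refine Finset.sum_le_sum fun i hi => ?_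
              have : i ≤ k - 1 := by
                have := Finset.mem_range.mp hi; omega
              exact mul_le_mul_of_nonneg_left (pow_le_pow_right₀ hR1 this) (norm_nonneg _)
          _ = c * R ^ (k - 1) := by rw [← Finset.sum_mul]
      have hzk : ‖z ^ k‖ = R ^ k := by rw [norm_pow, hz]
      have htri : ‖z ^ k‖ ≤ ‖P.eval z‖ + ‖∑ i ∈ Finset.range k, P.coeff i * z ^ i‖ := by
        have := norm_sub_le (P.eval z) (∑ i ∈ Finset.range k, P.coeff i * z ^ i)
        have h2 : P.eval z - (∑ i ∈ Finset.range k, P.coeff i * z ^ i) = z ^ k := by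
          rw [hev]; ring
        rwa [h2] at this
      have hRk : R ^ k = R ^ (k - 1) * R := by
        rw [← pow_succ]; congr 1; omega
      nlinarith [hzk, htri, hsum]
    have hEpos : 0 < R ^ (k - 1) * (R - c) := by positivity
    -- bound on the circle
    have hfb : ∀ z ∈ sphere (0 : ℂ) R, ‖f z‖ ≤ (R * (R - c))⁻¹ := by
      intro z hz
      rw [mem_sphere, dist_zero_right] at hz
      have hE : 0 < ‖P.eval z‖ := lt_of_lt_of_le hEpos (hPz z hz)
      have hfz : ‖f z‖ = R ^ m / ‖P.eval z‖ := by
        simp only [hf, norm_div, norm_pow, hz]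
      rw [hfz, inv_eq_one_div, div_le_div_iff₀ hE (by positivity)]
      have h1 : R ^ m * (R * (R - c)) = R ^ (m + 1) * (R - c) := by
        rw [pow_succ]; ring
      have h2 : R ^ (m + 1) ≤ R ^ (k - 1) := pow_le_pow_right₀ hR1 (by omega)
      calc R ^ m * (R * (R - c)) = R ^ (m + 1) * (R - c) := h1
        _ ≤ R ^ (k - 1) * (R - c) := mul_le_mul_of_nonneg_right h2 hRc.le
        _ ≤ ‖P.eval z‖ := hPz z hz
        _ = 1 * ‖P.eval z‖ := (one_mul _).symm
    calc ‖∮ z in C(0, r), f z‖ = ‖∮ z in C(0, R), f z‖ := by rw [heq R hRr]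
      _ ≤ 2 * Real.pi * R * (R * (R - c))⁻¹ :=
          circleIntegral.norm_integral_le_of_norm_le_const hR0.le hfb
      _ = 2 * Real.pi / (R - c) := by field_simp
      _ ≤ ε := by
          rw [div_le_iff₀ hRc]
          have := (div_le_iff₀ hε).mp hRce
          linarith
  by_contra hI
  have h0 : 0 < ‖∮ z in C(0, r), f z‖ := norm_pos_iff.mpr hI
  have := key (‖∮ z in C(0, r), f z‖ / 2) (by linarith)
  linarith
end

section
/- Let k ≥ 1 be a natural number and define q : ℂ² → ℂ³ by q(u, v) = (u^k, v^k, u·v). Then for all (u, v), (u', v') ∈ ℂ², one has q(u, v) = q(u', v') if and only if there exists ζ ∈ ℂ with ζ^k = 1 such that u' = ζ·u and v' = ζ⁻¹·v. -/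
/-- For `k ≥ 1` and `q : ℂ² → ℂ³`, `q(u, v) = (u^k, v^k, u·v)`, one has
`q(u, v) = q(u', v')` iff there is a `k`-th root of unity `ζ` with
`u' = ζ·u` and `v' = ζ⁻¹·v`. -/
theorem stmt6 (k : ℕ) (hk : 1 ≤ k) (u v u' v' : ℂ) :
    ((u ^ k, v ^ k, u * v) : ℂ × ℂ × ℂ) = (u' ^ k, v' ^ k, u' * v') ↔
      ∃ ζ : ℂ, ζ ^ k = 1 ∧ u' = ζ * u ∧ v' = ζ⁻¹ * v := by
  constructor
  · rintro h
    rw [Prod.mk.injEq, Prod.mk.injEq] at h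
    obtain ⟨h1, h2, h3⟩ := h
    by_cases hu : u = 0
    · subst hu
      have hu' : u' = 0 := by
        have : u' ^ k = 0 := by rw [← h1, zero_pow (by omega)]
        exact pow_eq_zero_iff (by omega) |>.mp this
      by_cases hv : v = 0
      · refine ⟨1, one_pow k, by simp [hu'], ?_⟩
        subst hv
        have : v' ^ k = 0 := by rw [← h2, zero_pow (by omega)]
        simpa using (pow_eq_zero_iff (by omega) |>.mp this)
      · have hv' : v' ≠ 0 := by
          intro h0
          apply hv
          have : v ^ k = 0 := by rw [h2, h0, zero_pow (by omega)]
          exact pow_eq_zero_iff (by omega) |>.mp this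
        refine ⟨v / v', ?_, by simp [hu'], ?_⟩
        · rw [div_pow, h2, div_self (pow_ne_zero _ hv')]
        · field_simp
    · have hu' : u' ≠ 0 := by
        intro h0
        apply hu
        have : u ^ k = 0 := by rw [h1, h0, zero_pow (by omega)]
        exact pow_eq_zero_iff (by omega) |>.mp this
      refine ⟨u' / u, by rw [div_pow, ← h1, div_self (pow_ne_zero _ hu)], by field_simp, ?_⟩
      have : v = (u' / u) * v' := by
        field_simp
        linear_combination h3
      rw [this]
      field_simp
  · rintro ⟨ζ, hζ, hu, hv⟩
    have hζ0 : ζ ≠ 0 := fun h0 => by simp [h0, zero_pow (by omega : k ≠ 0)] at hζ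
    subst hu hv
    rw [Prod.mk.injEq, Prod.mk.injEq]
    refine ⟨by rw [mul_pow, hζ, one_mul], by rw [mul_pow, inv_pow, hζ, inv_one, one_mul], ?_⟩
    field_simp
end

section
/- Let p ≥ 1 be a natural number. In the ring ℂ⟦u, v⟧ of formal power series in two variables, there do not exist λ, μ, ν ∈ ℂ⟦u, v⟧ and a one-variable polynomial Q ∈ ℂ[T] with constant coefficient 1 such that both of the following identities hold, where Q(uv) denotes Q evaluated at the power series u·v: (i) (p+1)·Q(uv)·u^{p−1}·v^{p} = p·λ·u^{p−1}·v^{p+1} + (p+1)·μ·u^{p}·v^{p} + ν·v, and (ii) p·Q(uv)·u^{p}·v^{p−1} = (p+1)·λ·u^{p}·v^{p} + p·μ·u^{p+1}·v^{p−1} + ν·u. -/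
open MvPowerSeries Finsupp

lemma constCoeff_aeval_aux (x : MvPowerSeries (Fin 2) ℂ)
    (hx : MvPowerSeries.constantCoeff x = 0) (Q : Polynomial ℂ) :
    MvPowerSeries.constantCoeff (Polynomial.aeval x Q) = Q.coeff 0 := by
  rw [Polynomial.aeval_def, Polynomial.hom_eval₂, hx]
  have : (MvPowerSeries.constantCoeff).comp
      (algebraMap ℂ (MvPowerSeries (Fin 2) ℂ)) = RingHom.id ℂ := by
    ext r; simp [MvPowerSeries.algebraMap_apply]
  rw [this, Polynomial.eval₂_at_zero]; simp

/-- In `ℂ⟦u, v⟧` (with `u, v` the two variables), for `p ≥ 1` there do not exist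
power series `l, m, n` and a one-variable polynomial `Q` with constant
coefficient `1` such that
`(p+1)·Q(uv)·u^(p-1)·v^p = p·l·u^(p-1)·v^(p+1) + (p+1)·m·u^p·v^p + n·v` and
`p·Q(uv)·u^p·v^(p-1) = (p+1)·l·u^p·v^p + p·m·u^(p+1)·v^(p-1) + n·u`. -/
theorem stmt7 (p : ℕ) (hp : 1 ≤ p)
    (u v : MvPowerSeries (Fin 2) ℂ)
    (hu : u = MvPowerSeries.X 0) (hv : v = MvPowerSeries.X 1) :
    ¬ ∃ (l m n : MvPowerSeries (Fin 2) ℂ) (Q : Polynomial ℂ),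
      Q.coeff 0 = 1 ∧
      ((p : MvPowerSeries (Fin 2) ℂ) + 1) * Polynomial.aeval (u * v) Q
          * u ^ (p - 1) * v ^ p =
        (p : MvPowerSeries (Fin 2) ℂ) * l * u ^ (p - 1) * v ^ (p + 1)
          + ((p : MvPowerSeries (Fin 2) ℂ) + 1) * m * u ^ p * v ^ p + n * v ∧
      (p : MvPowerSeries (Fin 2) ℂ) * Polynomial.aeval (u * v) Q
          * u ^ p * v ^ (p - 1) =
        ((p : MvPowerSeries (Fin 2) ℂ) + 1) * l * u ^ p * v ^ p
          + (p : MvPowerSeries (Fin 2) ℂ) * m * u ^ (p + 1) * v ^ (p - 1) + n * u := by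
  rintro ⟨l, m, n, Q, hQ0, h1, h2⟩
  subst hu hv
  classical
  -- abbreviations
  set A : MvPowerSeries (Fin 2) ℂ :=
    ((p : MvPowerSeries (Fin 2) ℂ) + 1) * Polynomial.aeval
      (MvPowerSeries.X 0 * MvPowerSeries.X 1) Q with hA
  set B : MvPowerSeries (Fin 2) ℂ :=
    (p : MvPowerSeries (Fin 2) ℂ) * Polynomial.aeval
      (MvPowerSeries.X 0 * MvPowerSeries.X 1) Q with hB
  have hcA : MvPowerSeries.constantCoeff A = (p : ℂ) + 1 := by
    rw [hA, map_mul, constCoeff_aeval_aux _ (by simp), hQ0]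
    simp
  have hcB : MvPowerSeries.constantCoeff B = (p : ℂ) := by
    rw [hB, map_mul, constCoeff_aeval_aux _ (by simp), hQ0]
    simp
  -- target exponents
  set e : Fin 2 →₀ ℕ := Finsupp.single 0 (p-1) + Finsupp.single 1 (p-1) with he
  set d1 : Fin 2 →₀ ℕ := Finsupp.single 0 (p-1) + Finsupp.single 1 p with hd1
  set d2 : Fin 2 →₀ ℕ := Finsupp.single 0 p + Finsupp.single 1 (p-1) with hd2
  have hX : ∀ (s : Fin 2) (k : ℕ), (MvPowerSeries.X s : MvPowerSeries (Fin 2) ℂ) ^ k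
      = MvPowerSeries.monomial (Finsupp.single s k) 1 :=
    fun s k => MvPowerSeries.X_pow_eq s k
  -- coefficient of d1 in equation (i)
  have H1 := congrArg (MvPowerSeries.coeff d1) h1
  rw [map_add, map_add] at H1
  -- LHS of (i)
  have e1 : MvPowerSeries.coeff d1 (A * MvPowerSeries.X 0 ^ (p-1) * MvPowerSeries.X 1 ^ p)
      = (p : ℂ) + 1 := by
    rw [hX 0 (p-1), hX 1 p, hd1, MvPowerSeries.coeff_add_mul_monomial,
      MvPowerSeries.coeff_mul_monomial, if_pos le_rfl]
    simp [hcA]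
  -- l-term of (i) vanishes
  have e2 : MvPowerSeries.coeff d1
      ((p : MvPowerSeries (Fin 2) ℂ) * l * MvPowerSeries.X 0 ^ (p-1)
        * MvPowerSeries.X 1 ^ (p+1)) = 0 := by
    rw [hX 1 (p+1), MvPowerSeries.coeff_mul_monomial, if_neg]
    intro hle
    have := hle 1
    simp [hd1, Finsupp.single_apply] at this

  -- m-term of (i) vanishes
  have e3 : MvPowerSeries.coeff d1
      (((p : MvPowerSeries (Fin 2) ℂ) + 1) * m * MvPowerSeries.X 0 ^ p
        * MvPowerSeries.X 1 ^ p) = 0 := by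
    rw [hX 0 p, hX 1 p, hd1, MvPowerSeries.coeff_add_mul_monomial,
      MvPowerSeries.coeff_mul_monomial, if_neg]
    · simp
    intro hle
    have := hle 0
    simp [Finsupp.single_apply] at this
    omega
  -- n-term of (i)
  have e4 : MvPowerSeries.coeff d1 (n * MvPowerSeries.X 1) = MvPowerSeries.coeff e n := by
    have hsplit : d1 = e + Finsupp.single 1 1 := by
      ext i
      fin_cases i <;> simp [hd1, he, Finsupp.single_apply] <;> omega
    rw [MvPowerSeries.X_def, hsplit, MvPowerSeries.coeff_add_mul_monomial, mul_one]
  rw [e1, e2, e3, e4, zero_add, zero_add] at H1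
  -- coefficient of d2 in equation (ii)
  have H2 := congrArg (MvPowerSeries.coeff d2) h2
  rw [map_add, map_add] at H2
  have f1 : MvPowerSeries.coeff d2 (B * MvPowerSeries.X 0 ^ p * MvPowerSeries.X 1 ^ (p-1))
      = (p : ℂ) := by
    rw [hX 0 p, hX 1 (p-1), hd2, MvPowerSeries.coeff_add_mul_monomial,
      MvPowerSeries.coeff_mul_monomial, if_pos le_rfl]
    simp [hcB]
  have f2 : MvPowerSeries.coeff d2
      (((p : MvPowerSeries (Fin 2) ℂ) + 1) * l * MvPowerSeries.X 0 ^ p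
        * MvPowerSeries.X 1 ^ p) = 0 := by
    rw [hX 1 p, MvPowerSeries.coeff_mul_monomial, if_neg]
    intro hle
    have := hle 1
    simp [hd2, Finsupp.single_apply] at this
    omega
  have f3 : MvPowerSeries.coeff d2
      ((p : MvPowerSeries (Fin 2) ℂ) * m * MvPowerSeries.X 0 ^ (p+1)
        * MvPowerSeries.X 1 ^ (p-1)) = 0 := by
    rw [hX 0 (p+1), hX 1 (p-1), hd2, MvPowerSeries.coeff_add_mul_monomial,
      MvPowerSeries.coeff_mul_monomial, if_neg]
    · simp
    intro hle
    have := hle 0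
    simp [Finsupp.single_apply] at this

  have f4 : MvPowerSeries.coeff d2 (n * MvPowerSeries.X 0) = MvPowerSeries.coeff e n := by
    have hsplit : d2 = e + Finsupp.single 0 1 := by
      ext i
      fin_cases i <;> simp [hd2, he, Finsupp.single_apply] <;> omega
    rw [MvPowerSeries.X_def, hsplit, MvPowerSeries.coeff_add_mul_monomial, mul_one]
  rw [f1, f2, f3, f4, zero_add, zero_add] at H2
  rw [← H2] at H1
  exact one_ne_zero (by linear_combination H1 : (1:ℂ) = 0)
end

section
/- Work in the ring ℂ⟦x, y, z⟧ of formal power series in three variables and set f = x³ + y³ + z³. There do not exist λ, μ, ν, A, B, C, D ∈ ℂ⟦x, y, z⟧ such that the following three identities hold simultaneously: (i) −x·y² = z·λ + f·A + 3x²·D, (ii) x²·y = z·μ + f·B + 3y²·D, (iii) 0 = z·ν + f·C + 3z²·D. -/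
open MvPowerSeries Finsupp

/-- In `ℂ⟦x, y, z⟧` with `f = x³ + y³ + z³`, there do not exist power series
`l, m, n, A, B, C, D` with `−x·y² = z·l + f·A + 3x²·D`,
`x²·y = z·m + f·B + 3y²·D`, and `0 = z·n + f·C + 3z²·D`. -/
theorem stmt9 (x y z f : MvPowerSeries (Fin 3) ℂ)
    (hx : x = MvPowerSeries.X 0) (hy : y = MvPowerSeries.X 1)
    (hz : z = MvPowerSeries.X 2)
    (hf : f = x ^ 3 + y ^ 3 + z ^ 3) :
    ¬ ∃ l m n A B C D : MvPowerSeries (Fin 3) ℂ,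
      -x * y ^ 2 = z * l + f * A + 3 * x ^ 2 * D ∧
      x ^ 2 * y = z * m + f * B + 3 * y ^ 2 * D ∧
      (0 : MvPowerSeries (Fin 3) ℂ) = z * n + f * C + 3 * z ^ 2 * D := by
  rintro ⟨l, m, n, A, B, C, D, eq1, eq2, -⟩
  classical
  -- the key algebraic consequence of eq1 and eq2
  have E : x^3*(-(x*y) - y^2*A + x^2*B) + y^3*(-(x*y) - y^2*A + x^2*B)
        + z^3*(-(x*y) - y^2*A + x^2*B) = z*(y^2*l - x^2*m - x*y*z^2) := by
    linear_combination y^2*eq1 - x^2*eq2 - (x*y + (-(x*y) - y^2*A + x^2*B))*hf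
  rw [hx, hy, hz] at E
  set g : MvPowerSeries (Fin 3) ℂ :=
    -(MvPowerSeries.X 0 * MvPowerSeries.X 1) - (MvPowerSeries.X 1)^2*A
      + (MvPowerSeries.X 0)^2*B with hg
  set h : MvPowerSeries (Fin 3) ℂ :=
    (MvPowerSeries.X 1)^2*l - (MvPowerSeries.X 0)^2*m
      - MvPowerSeries.X 0 * MvPowerSeries.X 1 * (MvPowerSeries.X 2)^2 with hh
  -- the exponents we use
  set m4 : Fin 3 →₀ ℕ := single 0 4 + single 1 1 with hm4
  set m11 : Fin 3 →₀ ℕ := single 0 1 + single 1 1 with hm11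
  have hm4_0 : m4 0 = 4 := by simp [hm4]
  have hm4_1 : m4 1 = 1 := by simp [hm4]
  have hm4_2 : m4 2 = 0 := by simp [hm4]
  have hm11_0 : m11 0 = 1 := by simp [hm11]
  have hm11_1 : m11 1 = 1 := by simp [hm11]
  have key := congrArg (MvPowerSeries.coeff m4) E
  -- rewrite products with monomials
  have hx3 : (MvPowerSeries.X 0 : MvPowerSeries (Fin 3) ℂ)^3 = monomial (single 0 3) 1 :=
    X_pow_eq 0 3
  have hy3 : (MvPowerSeries.X 1 : MvPowerSeries (Fin 3) ℂ)^3 = monomial (single 1 3) 1 :=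
    X_pow_eq 1 3
  have hz3 : (MvPowerSeries.X 2 : MvPowerSeries (Fin 3) ℂ)^3 = monomial (single 2 3) 1 :=
    X_pow_eq 2 3
  have hzm : (MvPowerSeries.X 2 : MvPowerSeries (Fin 3) ℂ) = monomial (single 2 1) 1 :=
    rfl
  have le1 : single (0 : Fin 3) 3 ≤ m4 := by
    rw [single_le_iff, hm4_0]; norm_num
  have nle2 : ¬ single (1 : Fin 3) 3 ≤ m4 := by
    rw [single_le_iff, hm4_1]; norm_num
  have nle3 : ¬ single (2 : Fin 3) 3 ≤ m4 := by
    rw [single_le_iff, hm4_2]; norm_num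
  have nle4 : ¬ single (2 : Fin 3) 1 ≤ m4 := by
    rw [single_le_iff, hm4_2]; norm_num
  have hsub : m4 - single 0 3 = m11 := by
    ext s
    fin_cases s <;> simp [hm4, hm11, Finsupp.single_apply]
  rw [map_add, map_add, hx3, hy3, hz3, hzm, coeff_monomial_mul, coeff_monomial_mul,
    coeff_monomial_mul, coeff_monomial_mul, if_pos le1, if_neg nle2, if_neg nle3,
    if_neg nle4, hsub, one_mul] at key
  simp only [add_zero] at key
  -- now compute the coefficient of g at m11
  have hxy : (MvPowerSeries.X 0 : MvPowerSeries (Fin 3) ℂ) * MvPowerSeries.X 1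
      = monomial m11 1 := by
    rw [hm11, show (MvPowerSeries.X 0 : MvPowerSeries (Fin 3) ℂ) = monomial (single 0 1) 1
        from rfl, show (MvPowerSeries.X 1 : MvPowerSeries (Fin 3) ℂ) = monomial (single 1 1) 1
        from rfl, monomial_mul_monomial, one_mul]
  have hy2 : (MvPowerSeries.X 1 : MvPowerSeries (Fin 3) ℂ)^2 = monomial (single 1 2) 1 :=
    X_pow_eq 1 2
  have hx2 : (MvPowerSeries.X 0 : MvPowerSeries (Fin 3) ℂ)^2 = monomial (single 0 2) 1 :=
    X_pow_eq 0 2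
  have nle5 : ¬ single (1 : Fin 3) 2 ≤ m11 := by
    rw [single_le_iff, hm11_1]; norm_num
  have nle6 : ¬ single (0 : Fin 3) 2 ≤ m11 := by
    rw [single_le_iff, hm11_0]; norm_num
  rw [hg, sub_add, map_sub, map_neg, hxy, coeff_monomial_same, map_sub, hy2, hx2,
    coeff_monomial_mul, coeff_monomial_mul, if_neg nle5, if_neg nle6] at key
  norm_num at key
end

section
/- Work in the ring ℂ⟦x, y, z, t⟧ of formal power series in four variables and set f = x·y·z − t³. There do not exist λ, μ, ν, θ, A, B, C, E, g ∈ ℂ⟦x, y, z, t⟧ such that the following four identities hold simultaneously: (i) y·z = t·λ + f·A + g·(y·z), (ii) 0 = t·μ + f·B + g·(x·z), (iii) 0 = t·ν + f·C + g·(x·y), (iv) 0 = t·θ + f·E − 3·g·t². -/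
open MvPowerSeries Finsupp

lemma coeffXmul (i : Fin 4) (e : Fin 4 →₀ ℕ) (he : e i = 0)
    (φ : MvPowerSeries (Fin 4) ℂ) :
    MvPowerSeries.coeff e (MvPowerSeries.X i * φ) = 0 := by
  rw [MvPowerSeries.X_def, MvPowerSeries.coeff_monomial_mul, if_neg]
  intro h
  have := h i
  simp [he] at this

lemma coeffmulmono (e : Fin 4 →₀ ℕ) (φ : MvPowerSeries (Fin 4) ℂ) :
    MvPowerSeries.coeff e (φ * MvPowerSeries.monomial e 1) =
      MvPowerSeries.coeff 0 φ := by
  rw [MvPowerSeries.coeff_mul_monomial, if_pos le_rfl]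
  simp

/-- In `ℂ⟦x, y, z, t⟧` with `f = x·y·z − t³`, there do not exist power series
`l, m, n, θ, A, B, C, E, g` with `y·z = t·l + f·A + g·(y·z)`,
`0 = t·m + f·B + g·(x·z)`, `0 = t·n + f·C + g·(x·y)`, and
`0 = t·θ + f·E − 3·g·t²`. -/
theorem stmt10 (x y z t f : MvPowerSeries (Fin 4) ℂ)
    (hx : x = MvPowerSeries.X 0) (hy : y = MvPowerSeries.X 1)
    (hz : z = MvPowerSeries.X 2) (ht : t = MvPowerSeries.X 3)
    (hf : f = x * y * z - t ^ 3) :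
    ¬ ∃ l m n θ A B C E g : MvPowerSeries (Fin 4) ℂ,
      y * z = t * l + f * A + g * (y * z) ∧
      (0 : MvPowerSeries (Fin 4) ℂ) = t * m + f * B + g * (x * z) ∧
      (0 : MvPowerSeries (Fin 4) ℂ) = t * n + f * C + g * (x * y) ∧
      (0 : MvPowerSeries (Fin 4) ℂ) = t * θ + f * E - 3 * g * t ^ 2 := by
  subst hx hy hz ht hf
  rintro ⟨l, m, n, θ, A, B, C, E, g, h1, h2, h3, -⟩
  set e1 : Fin 4 →₀ ℕ := Finsupp.single 1 1 + Finsupp.single 2 1 with he1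
  set e2 : Fin 4 →₀ ℕ := Finsupp.single 0 1 + Finsupp.single 2 1 with he2
  have hm1 : (MvPowerSeries.X (1:Fin 4) : MvPowerSeries (Fin 4) ℂ) * (MvPowerSeries.X (2:Fin 4) : MvPowerSeries (Fin 4) ℂ) = MvPowerSeries.monomial e1 1 := by
    rw [he1, MvPowerSeries.X_def, MvPowerSeries.X_def, MvPowerSeries.monomial_mul_monomial, one_mul]
  have hm2 : (MvPowerSeries.X (0:Fin 4) : MvPowerSeries (Fin 4) ℂ) * (MvPowerSeries.X (2:Fin 4) : MvPowerSeries (Fin 4) ℂ) = MvPowerSeries.monomial e2 1 := by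
    rw [he2, MvPowerSeries.X_def, MvPowerSeries.X_def, MvPowerSeries.monomial_mul_monomial, one_mul]
  -- coefficient of e1 in h1
  have key1 : (1 : ℂ) = MvPowerSeries.coeff 0 g := by
    have := congrArg (MvPowerSeries.coeff e1) h1
    rw [hm1, MvPowerSeries.coeff_monomial_same] at this
    have hr : (MvPowerSeries.X (3:Fin 4) : MvPowerSeries (Fin 4) ℂ) * l + ((MvPowerSeries.X (0:Fin 4) : MvPowerSeries (Fin 4) ℂ) * (MvPowerSeries.X (1:Fin 4) : MvPowerSeries (Fin 4) ℂ) * (MvPowerSeries.X (2:Fin 4) : MvPowerSeries (Fin 4) ℂ) - (MvPowerSeries.X (3:Fin 4) : MvPowerSeries (Fin 4) ℂ) ^ 3) * A + g * MvPowerSeries.monomial e1 1 =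
        (MvPowerSeries.X (3:Fin 4) : MvPowerSeries (Fin 4) ℂ) * l + (MvPowerSeries.X (0:Fin 4) : MvPowerSeries (Fin 4) ℂ) * ((MvPowerSeries.X (1:Fin 4) : MvPowerSeries (Fin 4) ℂ) * (MvPowerSeries.X (2:Fin 4) : MvPowerSeries (Fin 4) ℂ) * A) + (-1 : ℂ) • ((MvPowerSeries.X (3:Fin 4) : MvPowerSeries (Fin 4) ℂ) * ((MvPowerSeries.X (3:Fin 4) : MvPowerSeries (Fin 4) ℂ) * ((MvPowerSeries.X (3:Fin 4) : MvPowerSeries (Fin 4) ℂ) * A)))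
          + g * MvPowerSeries.monomial e1 1 := by ring_nf; rw [neg_smul, one_smul]; ring
    rw [hr] at this
    simp only [map_add, map_smul] at this
    rw [coeffXmul 3 e1 (by simp [he1, Finsupp.single_apply]) l,
        coeffXmul 0 e1 (by simp [he1, Finsupp.single_apply]),
        coeffXmul 3 e1 (by simp [he1, Finsupp.single_apply]),
        coeffmulmono e1 g] at this
    simpa using this
  have key2 : (0 : ℂ) = MvPowerSeries.coeff 0 g := by
    have := congrArg (MvPowerSeries.coeff e2) h2
    have hr : (MvPowerSeries.X (3:Fin 4) : MvPowerSeries (Fin 4) ℂ) * m + ((MvPowerSeries.X (0:Fin 4) : MvPowerSeries (Fin 4) ℂ) * (MvPowerSeries.X (1:Fin 4) : MvPowerSeries (Fin 4) ℂ) * (MvPowerSeries.X (2:Fin 4) : MvPowerSeries (Fin 4) ℂ) - (MvPowerSeries.X (3:Fin 4) : MvPowerSeries (Fin 4) ℂ) ^ 3) * B + g * ((MvPowerSeries.X (0:Fin 4) : MvPowerSeries (Fin 4) ℂ) * (MvPowerSeries.X (2:Fin 4) : MvPowerSeries (Fin 4) ℂ)) =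
        (MvPowerSeries.X (3:Fin 4) : MvPowerSeries (Fin 4) ℂ) * m + (MvPowerSeries.X (1:Fin 4) : MvPowerSeries (Fin 4) ℂ) * ((MvPowerSeries.X (0:Fin 4) : MvPowerSeries (Fin 4) ℂ) * (MvPowerSeries.X (2:Fin 4) : MvPowerSeries (Fin 4) ℂ) * B) + (-1 : ℂ) • ((MvPowerSeries.X (3:Fin 4) : MvPowerSeries (Fin 4) ℂ) * ((MvPowerSeries.X (3:Fin 4) : MvPowerSeries (Fin 4) ℂ) * ((MvPowerSeries.X (3:Fin 4) : MvPowerSeries (Fin 4) ℂ) * B)))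
          + g * MvPowerSeries.monomial e2 1 := by
      rw [← hm2]; ring_nf; rw [neg_smul, one_smul]; ring
    rw [hr] at this
    simp only [map_add, map_smul, map_zero] at this
    rw [coeffXmul 3 e2 (by simp [he2, Finsupp.single_apply]) m,
        coeffXmul 1 e2 (by simp [he2, Finsupp.single_apply]),
        coeffXmul 3 e2 (by simp [he2, Finsupp.single_apply]),
        coeffmulmono e2 g] at this
    simpa using this
  rw [← key2] at key1
  exact one_ne_zero key1
end

section
/- Work in the ring ℂ⟦x, y, z⟧ of formal power series in three variables and set f = x³ + y³ + z³. There do not exist λ, μ, ν, A, B, C, a, b, c ∈ ℂ⟦x, y, z⟧ such that the following three identities hold simultaneously: (i) x·y = z·λ + f·A + 3x²·b − 3y²·a, (ii) 0 = z·μ + f·B + 3y²·c − 3z²·b, (iii) 0 = z·ν + f·C + 3z²·a − 3x²·c. -/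
/-- In `ℂ⟦x, y, z⟧` with `f = x³ + y³ + z³`, there do not exist power series
`l, m, n, A, B, C, a, b, c` with `x·y = z·l + f·A + 3x²·b − 3y²·a`,
`0 = z·m + f·B + 3y²·c − 3z²·b`, and `0 = z·n + f·C + 3z²·a − 3x²·c`. -/
theorem stmt11 (x y z f : MvPowerSeries (Fin 3) ℂ)
    (hx : x = MvPowerSeries.X 0) (hy : y = MvPowerSeries.X 1)
    (hz : z = MvPowerSeries.X 2)
    (hf : f = x ^ 3 + y ^ 3 + z ^ 3) :
    ¬ ∃ l m n A B C a b c : MvPowerSeries (Fin 3) ℂ,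
      x * y = z * l + f * A + 3 * x ^ 2 * b - 3 * y ^ 2 * a ∧
      (0 : MvPowerSeries (Fin 3) ℂ) = z * m + f * B + 3 * y ^ 2 * c - 3 * z ^ 2 * b ∧
      (0 : MvPowerSeries (Fin 3) ℂ) = z * n + f * C + 3 * z ^ 2 * a - 3 * x ^ 2 * c := by
  rintro ⟨l, m, n, A, B, C, a, b, c, h1, -, -⟩
  subst hx hy hz hf
  set d : Fin 3 →₀ ℕ := Finsupp.single 0 1 + Finsupp.single 1 1 with hd
  have key := congrArg (MvPowerSeries.coeff (R := ℂ) d) h1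
  have hnle0 : ¬ Finsupp.single (0 : Fin 3) 2 ≤ d := by
    intro h; have := h 0; simp [hd] at this
  have hnle1 : ¬ Finsupp.single (1 : Fin 3) 2 ≤ d := by
    intro h; have := h 1; simp [hd] at this
  have hnle2 : ¬ Finsupp.single (2 : Fin 3) 1 ≤ d := by
    intro h; have := h 2; simp [hd] at this
  have hnle0' : ¬ Finsupp.single (0 : Fin 3) 3 ≤ d := by
    intro h; have := h 0; simp [hd] at this
  have hnle1' : ¬ Finsupp.single (1 : Fin 3) 3 ≤ d := by
    intro h; have := h 1; simp [hd] at this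
  have hnle2' : ¬ Finsupp.single (2 : Fin 3) 3 ≤ d := by
    intro h; have := h 2; simp [hd] at this
  rw [show (MvPowerSeries.X 0 : MvPowerSeries (Fin 3) ℂ) * MvPowerSeries.X 1
        = MvPowerSeries.monomial (R := ℂ) d 1 by
      rw [MvPowerSeries.X_def, MvPowerSeries.X_def, MvPowerSeries.monomial_mul_monomial,
        one_mul]] at key
  have e1 : MvPowerSeries.coeff (R := ℂ) d ((MvPowerSeries.X 2 : MvPowerSeries (Fin 3) ℂ) * l) = 0 := by
    rw [MvPowerSeries.X_def, MvPowerSeries.coeff_monomial_mul, if_neg hnle2]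
  have e2 : MvPowerSeries.coeff (R := ℂ) d
      (((MvPowerSeries.X 0 : MvPowerSeries (Fin 3) ℂ) ^ 3 + MvPowerSeries.X 1 ^ 3
        + MvPowerSeries.X 2 ^ 3) * A) = 0 := by
    rw [add_mul, add_mul, map_add, map_add, MvPowerSeries.X_pow_eq, MvPowerSeries.X_pow_eq,
      MvPowerSeries.X_pow_eq, MvPowerSeries.coeff_monomial_mul, MvPowerSeries.coeff_monomial_mul,
      MvPowerSeries.coeff_monomial_mul, if_neg hnle0', if_neg hnle1', if_neg hnle2']
    ring
  have e3 : MvPowerSeries.coeff (R := ℂ) d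
      (3 * (MvPowerSeries.X 0 : MvPowerSeries (Fin 3) ℂ) ^ 2 * b) = 0 := by
    rw [mul_comm (3 : MvPowerSeries (Fin 3) ℂ), mul_assoc, MvPowerSeries.X_pow_eq,
      MvPowerSeries.coeff_monomial_mul, if_neg hnle0]
  have e4 : MvPowerSeries.coeff (R := ℂ) d
      (3 * (MvPowerSeries.X 1 : MvPowerSeries (Fin 3) ℂ) ^ 2 * a) = 0 := by
    rw [mul_comm (3 : MvPowerSeries (Fin 3) ℂ), mul_assoc, MvPowerSeries.X_pow_eq,
      MvPowerSeries.coeff_monomial_mul, if_neg hnle1]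
  rw [map_sub, map_add, map_add, e1, e2, e3, e4, MvPowerSeries.coeff_monomial_same] at key
  norm_num at key
end

section
/- Let a, b, c be polynomials in ℂ[x₁, x₂, x₃]. Then a·x₃ + b·x₁ + c·x₂ lies in the ideal generated by x₁² + x₂² + x₃² if and only if there exist polynomials g, λ, λ', μ ∈ ℂ[x₁, x₂, x₃] such that a = g·x₃ + λ·x₁ + μ·x₂, b = g·x₁ + λ'·x₂ − λ·x₃, and c = g·x₂ − λ'·x₁ − μ·x₃. -/
open MvPolynomial

noncomputable def phi : MvPolynomial (Fin 3) ℂ →ₐ[ℂ] MvPolynomial (Fin 3) ℂ :=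
  aeval (fun i => if i = 2 then 0 else X i)

lemma phi_X0 : phi (X 0) = X 0 := by simp [phi]
lemma phi_X1 : phi (X 1) = X 1 := by simp [phi]
lemma phi_X2 : phi (X 2) = 0 := by simp [phi]

lemma X2_dvd_sub_phi (p : MvPolynomial (Fin 3) ℂ) : (X 2 : MvPolynomial (Fin 3) ℂ) ∣ p - phi p := by
  induction p using MvPolynomial.induction_on with
  | C a => simp [phi]
  | add p q hp hq =>
    have : p + q - phi (p + q) = (p - phi p) + (q - phi q) := by
      rw [map_add]; ring
    rw [this]; exact dvd_add hp hq
  | mul_X p i hp =>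
    rw [map_mul]
    by_cases hi : i = 2
    · subst hi
      rw [phi_X2, mul_zero, sub_zero]
      exact Dvd.intro_left p rfl
    · have : phi (X i) = X i := by simp [phi, hi]
      rw [this]
      have : p * X i - phi p * X i = (p - phi p) * X i := by ring
      rw [this]
      exact hp.mul_right _

lemma prime_X0 : Prime (X 0 : MvPolynomial (Fin 3) ℂ) := by
  rw [← MulEquiv.prime_iff (finSuccEquiv ℂ 2)]
  show Prime (finSuccEquiv ℂ 2 (X 0))
  rw [finSuccEquiv_X_zero]
  exact Polynomial.prime_X

lemma syzygy (a b c : MvPolynomial (Fin 3) ℂ)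
    (h : a * X 2 + b * X 0 + c * X 1 = 0) :
    ∃ l l' m : MvPolynomial (Fin 3) ℂ,
      a = l * X 0 + m * X 1 ∧ b = l' * X 1 - l * X 2 ∧ c = -(l' * X 0) - m * X 2 := by
  have h0 : phi b * X 0 + phi c * X 1 = 0 := by
    have := congrArg phi h
    simpa [map_add, map_mul, phi_X0, phi_X1, phi_X2] using this
  -- X 0 divides phi c
  have hdvd : (X 0 : MvPolynomial (Fin 3) ℂ) ∣ phi c * X 1 := by
    refine ⟨-(phi b), ?_⟩
    linear_combination h0
  have hX01 : ¬ (X 0 : MvPolynomial (Fin 3) ℂ) ∣ X 1 := by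
    rw [X_dvd_X]; decide
  have hc : (X 0 : MvPolynomial (Fin 3) ℂ) ∣ phi c :=
    (prime_X0.2.2 _ _ hdvd).resolve_right hX01
  obtain ⟨d, hd⟩ := hc
  have hb : phi b = -(d * X 1) := by
    have hx0 : (X 0 : MvPolynomial (Fin 3) ℂ) ≠ 0 := X_ne_zero 0
    apply mul_left_cancel₀ hx0
    linear_combination h0 - X 1 * hd
  obtain ⟨B, hB⟩ := X2_dvd_sub_phi b
  obtain ⟨C, hC⟩ := X2_dvd_sub_phi c
  have hbe : b = -(d * X 1) + X 2 * B := by linear_combination hB + hb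
  have hce : c = X 0 * d + X 2 * C := by linear_combination hC + hd
  have hx2 : (X 2 : MvPolynomial (Fin 3) ℂ) ≠ 0 := X_ne_zero 2
  have ha : a = -(B * X 0) - C * X 1 := by
    have key : X 2 * (a + B * X 0 + C * X 1) = 0 := by
      linear_combination h - X 0 * hbe - X 1 * hce
    have h2 := (mul_eq_zero.mp key).resolve_left hx2
    linear_combination h2
  exact ⟨-B, -d, -C, by linear_combination ha, by linear_combination hbe, by linear_combination hce⟩
/-- In `ℂ[x₁, x₂, x₃]` (with `x₁ = X 0`, `x₂ = X 1`, `x₃ = X 2`),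
`a·x₃ + b·x₁ + c·x₂` lies in the ideal generated by `x₁² + x₂² + x₃²` iff there
exist `g, l, l', m` with `a = g·x₃ + l·x₁ + m·x₂`, `b = g·x₁ + l'·x₂ − l·x₃`,
and `c = g·x₂ − l'·x₁ − m·x₃`. -/
theorem stmt12 (a b c : MvPolynomial (Fin 3) ℂ) :
    a * MvPolynomial.X 2 + b * MvPolynomial.X 0 + c * MvPolynomial.X 1 ∈
      Ideal.span {(MvPolynomial.X 0 ^ 2 + MvPolynomial.X 1 ^ 2 +
        MvPolynomial.X 2 ^ 2 : MvPolynomial (Fin 3) ℂ)} ↔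
    ∃ g l l' m : MvPolynomial (Fin 3) ℂ,
      a = g * MvPolynomial.X 2 + l * MvPolynomial.X 0 + m * MvPolynomial.X 1 ∧
      b = g * MvPolynomial.X 0 + l' * MvPolynomial.X 1 - l * MvPolynomial.X 2 ∧
      c = g * MvPolynomial.X 1 - l' * MvPolynomial.X 0 - m * MvPolynomial.X 2 := by
  constructor
  · intro hmem
    rw [Ideal.mem_span_singleton'] at hmem
    obtain ⟨g, hg⟩ := hmem
    obtain ⟨l, l', m, ha, hb, hc⟩ := syzygy (a - g * X 2) (b - g * X 0) (c - g * X 1)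
      (by linear_combination -hg)
    exact ⟨g, l, l', m, by linear_combination ha, by linear_combination hb,
      by linear_combination hc⟩
  · rintro ⟨g, l, l', m, rfl, rfl, rfl⟩
    rw [Ideal.mem_span_singleton']
    exact ⟨g, by ring⟩
end

section
/- Let k ≥ 2 be a natural number. In the polynomial ring ℂ[x, y, z, X, Y, Z] in six variables, the polynomial (y·X − x·Y)² − k²·z^{2k−2}·Z² + 4·z^{k}·X·Y belongs to the ideal generated by x·y − z^{k} and y·X + x·Y − k·z^{k−1}·Z. -/
/-- For `k ≥ 2`, in `ℂ[x, y, z, dx, dy, dz]` (six variables), the polynomial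
`(y·dx − x·dy)² − k²·z^(2k−2)·dz² + 4·z^k·dx·dy` belongs to the ideal generated
by `x·y − z^k` and `y·dx + x·dy − k·z^(k−1)·dz`. -/
theorem stmt13 (k : ℕ) (hk : 2 ≤ k)
    (x y z dx dy dz : MvPolynomial (Fin 6) ℂ)
    (hx : x = MvPolynomial.X 0) (hy : y = MvPolynomial.X 1)
    (hz : z = MvPolynomial.X 2) (hdx : dx = MvPolynomial.X 3)
    (hdy : dy = MvPolynomial.X 4) (hdz : dz = MvPolynomial.X 5) :
    (y * dx - x * dy) ^ 2 - (k : MvPolynomial (Fin 6) ℂ) ^ 2 * z ^ (2 * k - 2) * dz ^ 2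
        + 4 * z ^ k * dx * dy ∈
      Ideal.span {x * y - z ^ k,
        y * dx + x * dy - (k : MvPolynomial (Fin 6) ℂ) * z ^ (k - 1) * dz} := by
  obtain ⟨m, rfl⟩ : ∃ m, k = m + 2 := ⟨k - 2, by omega⟩
  rw [Ideal.mem_span_pair]
  refine ⟨-(4 * dx * dy),
    y * dx + x * dy + (↑(m + 2) : MvPolynomial (Fin 6) ℂ) * z ^ (m + 2 - 1) * dz, ?_⟩
  have h1 : 2 * (m + 2) - 2 = 2 * (m + 1) := by omega
  have h2 : m + 2 - 1 = m + 1 := by omega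
  rw [h1, h2]
  push_cast
  ring
end
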